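/- Let α = 1, Σ_ω = 0, Σ_ν symmetric positive definite, C_0 symmetric positive definite, and consider the recursion C_{n+1}⁻¹ = GᵀΣ_ν⁻¹G + C_n⁻¹, C_{n+1}⁻¹ m_{n+1} = GᵀΣ_ν⁻¹y + C_n⁻¹ m_n. Define G' = G C_0^{1/2}, S = (G')ᵀΣ_ν⁻¹G', m'_n = C_0^{-1/2} m_n, let Q be the orthogonal projection onto the nullspace of S and P = I − Q. Then: (i) Q m'_n = Q m'_0 for all n; (ii) there exists a unique m_* in the orthogonal complement of the nullspace of S with S m_* = (G')ᵀΣ_ν⁻¹y, and there exists K > 0 such that ‖P m'_n − m_*‖ ≤ K/n for all n ≥ 1; (iii) (C'_n)⁻¹ = I + nS where C'_n = C_0^{-1/2} C_n C_0^{-1/2}, so in particular Q(C'_n)⁻¹ = Q for all n. -/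

import Mathlib

open Matrix

/-- The square root of a positive semidefinite matrix, as defined in the older Mathlib
(removed since). -/
noncomputable def Matrix.PosSemidef.sqrt {n : Type*} [Fintype n] [DecidableEq n]
    {A : Matrix n n ℝ} (hA : A.PosSemidef) : Matrix n n ℝ :=
  (hA.1.eigenvectorUnitary : Matrix n n ℝ) * diagonal (Real.sqrt ∘ hA.1.eigenvalues) *
    (star hA.1.eigenvectorUnitary : Matrix n n ℝ)

open scoped RealInnerProductSpace

private lemma kua_sqrt_mul_self {n : Type*} [Fintype n] [DecidableEq n]
    {A : Matrix n n ℝ} (hA : A.PosSemidef) : hA.sqrt * hA.sqrt = A := by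
  have hU : (star hA.1.eigenvectorUnitary : Matrix n n ℝ) * (hA.1.eigenvectorUnitary : Matrix n n ℝ) = 1 :=
    Unitary.star_mul_self_of_mem hA.1.eigenvectorUnitary.2
  have hD : diagonal (Real.sqrt ∘ hA.1.eigenvalues) * diagonal (Real.sqrt ∘ hA.1.eigenvalues)
      = diagonal hA.1.eigenvalues := by
    rw [diagonal_mul_diagonal]
    congr 1
    funext i
    exact Real.mul_self_sqrt (hA.eigenvalues_nonneg i)
  conv_rhs => rw [hA.1.spectral_theorem]
  rw [Unitary.conjStarAlgAut_apply]
  simp only [Matrix.PosSemidef.sqrt]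
  calc _ = (hA.1.eigenvectorUnitary : Matrix n n ℝ) * diagonal (Real.sqrt ∘ hA.1.eigenvalues) *
        ((star hA.1.eigenvectorUnitary : Matrix n n ℝ) * (hA.1.eigenvectorUnitary : Matrix n n ℝ)) *
        diagonal (Real.sqrt ∘ hA.1.eigenvalues) * (star hA.1.eigenvectorUnitary : Matrix n n ℝ) := by
          simp only [Matrix.mul_assoc]
    _ = _ := by
          rw [hU, Matrix.mul_one, Matrix.mul_assoc _ (diagonal _) (diagonal _), hD]
          simp

private lemma kua_sqrt_transpose {n : Type*} [Fintype n] [DecidableEq n]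
    {A : Matrix n n ℝ} (hA : A.PosSemidef) : hA.sqrtᵀ = hA.sqrt := by
  rw [← conjTranspose_eq_transpose_of_trivial]
  simp only [Matrix.PosSemidef.sqrt, conjTranspose_mul, diagonal_conjTranspose, Matrix.mul_assoc]
  simp [Matrix.star_eq_conjTranspose]

@[reducible] private def toE {n : ℕ} (v : Fin n → ℝ) : EuclideanSpace ℝ (Fin n) := WithLp.toLp 2 v

private lemma kua_eq_zero {a b : ℕ} (M : Matrix (Fin a) (Fin b) ℝ)
    (h : ∀ v : Fin b → ℝ, M *ᵥ v = 0) : M = 0 := by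
  ext i j
  have := congrFun (h (Pi.single j 1)) i
  rwa [Matrix.mulVec_single_one] at this

private lemma kua_inner_dot {n : ℕ} (x y : EuclideanSpace ℝ (Fin n)) : ⟪x, y⟫ = x ⬝ᵥ y := by
  simp [PiLp.inner_apply, dotProduct, mul_comm]

private lemma kua_sym {n : ℕ} (M : Matrix (Fin n) (Fin n) ℝ) (hM : Mᵀ = M)
    (x y : EuclideanSpace ℝ (Fin n)) :
    ⟪toE (M *ᵥ x), y⟫ = ⟪x, toE (M *ᵥ y)⟫ := by
  rw [kua_inner_dot, kua_inner_dot]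
  show (M *ᵥ x) ⬝ᵥ y = x ⬝ᵥ (M *ᵥ y)
  rw [Matrix.dotProduct_mulVec x M y]
  congr 1
  rw [← Matrix.mulVec_transpose, hM]

private lemma kua_surj {n : ℕ} (S Q : Matrix (Fin n) (Fin n) ℝ)
    (hSsym : Sᵀ = S) (hQsymm : Qᵀ = Q)
    (hQrange : ∀ v : EuclideanSpace ℝ (Fin n), S *ᵥ v = 0 ↔ Q *ᵥ v = v)
    (r : EuclideanSpace ℝ (Fin n)) (hr : Q *ᵥ r = 0) :
    ∃ u : EuclideanSpace ℝ (Fin n), S *ᵥ u = r := by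
  set T := Matrix.toEuclideanLin S with hT
  obtain ⟨p, hp, w, hw, hdec⟩ := (LinearMap.range T).exists_add_mem_mem_orthogonal r
  obtain ⟨u, hu⟩ := hp
  have hworth := (Submodule.mem_orthogonal _ _).mp hw
  have hSw : toE (S *ᵥ w) = 0 := by
    have h1 : ⟪toE (S *ᵥ toE (S *ᵥ w)), w⟫ = ⟪toE (S *ᵥ w), toE (S *ᵥ w)⟫ :=
      kua_sym S hSsym (toE (S *ᵥ w)) w
    have h0 : ⟪toE (S *ᵥ toE (S *ᵥ w)), w⟫ = 0 := hworth _ ⟨toE (S *ᵥ w), rfl⟩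
    exact inner_self_eq_zero.mp (h1.symm.trans h0)
  have hQw : Q *ᵥ w = w := (hQrange w).mp (congrArg WithLp.ofLp hSw)
  have hrw : ⟪r, w⟫ = (0 : ℝ) := by
    have h3 : ⟪toE (Q *ᵥ r), w⟫ = ⟪r, toE (Q *ᵥ w)⟫ := kua_sym Q hQsymm r w
    rw [hr, hQw] at h3
    calc ⟪r, w⟫ = ⟪r, toE w⟫ := rfl
      _ = ⟪toE 0, w⟫ := h3.symm
      _ = 0 := by
          show ⟪(0 : EuclideanSpace ℝ (Fin n)), w⟫ = 0
          simp
  have hw0 : w = 0 := by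
    have h2 : ⟪r, w⟫ = ⟪p, w⟫ + ⟪w, w⟫ := by rw [hdec, inner_add_left]
    have hpw : ⟪p, w⟫ = (0 : ℝ) := hworth p ⟨u, hu⟩
    rw [hrw, hpw, zero_add] at h2
    exact inner_self_eq_zero.mp h2.symm
  refine ⟨u, ?_⟩
  have h4 : T u = r := by rw [hu]; rw [hdec, hw0, add_zero]
  exact congrArg WithLp.ofLp h4

set_option maxHeartbeats 1000000 in
/-- For the unregularized Kalman iteration (`α = 1`, `Sω = 0`) with
positive definite `C 0`, setting `G' = G C₀^{1/2}`, `S = G'ᵀ Sν⁻¹ G'`,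
`m' n = C₀^{-1/2} m n`, with `Q` the orthogonal projection onto the nullspace of `S`
and `P = I − Q`: (i) `Q m' n = Q m' 0` for all `n`; (ii) there is a unique `mstar`
orthogonal to the nullspace of `S` with `S mstar = G'ᵀ Sν⁻¹ y`, and a `K > 0` with
`‖P m' n − mstar‖ ≤ K / n` for `n ≥ 1`; (iii) `(C' n)⁻¹ = I + n S` where
`C' n = C₀^{-1/2} C n C₀^{-1/2}`, so in particular `Q (C' n)⁻¹ = Q`. -/
theorem kalman_unregularized_asymptotics
    {Nθ Ny : ℕ} (hNθ : 0 < Nθ) (hNy : 0 < Ny)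
    (G : Matrix (Fin Ny) (Fin Nθ) ℝ)
    (y : EuclideanSpace ℝ (Fin Ny))
    (Sν : Matrix (Fin Ny) (Fin Ny) ℝ) (hSν : Sν.PosDef)
    (C : ℕ → Matrix (Fin Nθ) (Fin Nθ) ℝ) (hC0 : (C 0).PosDef)
    (hCrec : ∀ n, C (n + 1) = (Gᵀ * Sν⁻¹ * G + (C n)⁻¹)⁻¹)
    (m : ℕ → EuclideanSpace ℝ (Fin Nθ))
    (hmrec : ∀ n, (C (n + 1))⁻¹ *ᵥ m (n + 1) = (Gᵀ * Sν⁻¹) *ᵥ y + (C n)⁻¹ *ᵥ m n)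
    (G' : Matrix (Fin Ny) (Fin Nθ) ℝ) (hG' : G' = G * hC0.posSemidef.sqrt)
    (S : Matrix (Fin Nθ) (Fin Nθ) ℝ) (hS : S = G'ᵀ * Sν⁻¹ * G')
    (m' : ℕ → EuclideanSpace ℝ (Fin Nθ))
    (hm' : ∀ n, m' n = hC0.posSemidef.sqrt⁻¹ *ᵥ m n)
    (C' : ℕ → Matrix (Fin Nθ) (Fin Nθ) ℝ)
    (hC' : ∀ n, C' n = hC0.posSemidef.sqrt⁻¹ * C n * hC0.posSemidef.sqrt⁻¹)
    (Q : Matrix (Fin Nθ) (Fin Nθ) ℝ) (hQsymm : Qᵀ = Q) (hQidem : Q * Q = Q)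
    (hQrange : ∀ v : EuclideanSpace ℝ (Fin Nθ), S *ᵥ v = 0 ↔ Q *ᵥ v = v) :
    (∀ n, Q *ᵥ m' n = Q *ᵥ m' 0) ∧
    (∃ mstar : EuclideanSpace ℝ (Fin Nθ),
      (Q *ᵥ mstar = 0 ∧ S *ᵥ mstar = (G'ᵀ * Sν⁻¹) *ᵥ y) ∧
      (∀ m₂ : EuclideanSpace ℝ (Fin Nθ),
        Q *ᵥ m₂ = 0 ∧ S *ᵥ m₂ = (G'ᵀ * Sν⁻¹) *ᵥ y → m₂ = mstar) ∧
      (∃ K > (0 : ℝ), ∀ n : ℕ, 1 ≤ n →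
        ‖(show EuclideanSpace ℝ (Fin Nθ) from WithLp.toLp 2 (((1 : Matrix (Fin Nθ) (Fin Nθ) ℝ) - Q) *ᵥ m' n))
          - mstar‖ ≤ K / n)) ∧
    (∀ n : ℕ, (C' n)⁻¹ = 1 + (n : ℝ) • S ∧ Q * (C' n)⁻¹ = Q) := by
  set R := hC0.posSemidef.sqrt with hRdef
  set A := Gᵀ * Sν⁻¹ * G with hA
  -- basic facts about R
  have hRR : R * R = C 0 := kua_sqrt_mul_self hC0.posSemidef
  have hRs : Rᵀ = R := kua_sqrt_transpose hC0.posSemidef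
  have hRdet : IsUnit R.det := by
    have hdd : R.det * R.det = (C 0).det := by rw [← det_mul, hRR]
    have h0 : (C 0).det ≠ 0 := hC0.det_pos.ne'
    exact isUnit_iff_ne_zero.mpr fun h => h0 (by rw [← hdd, h, zero_mul])
  have hRinvR : R⁻¹ * R = 1 := nonsing_inv_mul R hRdet
  have hRRinv : R * R⁻¹ = 1 := mul_nonsing_inv R hRdet
  have hSνi : (Sν⁻¹).PosDef := hSν.inv
  have hApsd : A.PosSemidef := by
    have h := hSνi.posSemidef.conjTranspose_mul_mul_same G
    rwa [conjTranspose_eq_transpose_of_trivial] at h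
  have hSpsd : S.PosSemidef := by
    have h := hSνi.posSemidef.conjTranspose_mul_mul_same G'
    rwa [conjTranspose_eq_transpose_of_trivial, ← hS] at h
  have hSsym : Sᵀ = S := by
    have h := hSpsd.1
    rwa [Matrix.IsHermitian, conjTranspose_eq_transpose_of_trivial] at h
  -- the inverse covariance recursion
  have hCpos : ∀ n, (C n).PosDef ∧ (C n)⁻¹ = (n : ℝ) • A + (C 0)⁻¹ := by
    intro n
    induction n with
    | zero => exact ⟨hC0, by simp⟩
    | succ k ih =>
      obtain ⟨hpos, hinv⟩ := ih
      have hsum : (A + (C k)⁻¹).PosDef := Matrix.PosDef.posSemidef_add hApsd hpos.inv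
      refine ⟨by rw [hCrec k]; exact hsum.inv, ?_⟩
      rw [hCrec k, Matrix.nonsing_inv_nonsing_inv _ hsum.det_pos.ne'.isUnit, hinv]
      push_cast
      rw [add_smul, one_smul]
      abel
  have hRGt : G'ᵀ = R * Gᵀ := by rw [hG', transpose_mul, hRs]
  have hRA : R * A * R = S := by
    rw [hS, hRGt, hG', hA]
    simp only [Matrix.mul_assoc]
  have hRC0inv : R * (C 0)⁻¹ = R⁻¹ := by
    rw [← hRR, Matrix.mul_inv_rev, ← Matrix.mul_assoc, hRRinv, one_mul]
  have hRC0R : R * (C 0)⁻¹ * R = 1 := by rw [hRC0inv, hRinvR]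
  have hRCnR : ∀ n : ℕ, R * (C n)⁻¹ * R = 1 + (n : ℝ) • S := by
    intro n
    rw [(hCpos n).2, Matrix.mul_add, Matrix.add_mul, mul_smul_comm, smul_mul_assoc, hRA,
      hRC0R, add_comm]
  have hC'invEq : ∀ n : ℕ, (C' n)⁻¹ = 1 + (n : ℝ) • S := by
    intro n
    rw [hC' n, Matrix.mul_inv_rev, Matrix.mul_inv_rev,
      Matrix.nonsing_inv_nonsing_inv _ hRdet, ← hRCnR n]
    simp only [Matrix.mul_assoc]
  -- S and Q annihilation
  have hSQv : ∀ v : Fin Nθ → ℝ, S *ᵥ (Q *ᵥ v) = 0 := by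
    intro v
    exact (hQrange (toE (Q *ᵥ v))).mpr (by rw [Matrix.mulVec_mulVec, hQidem])
  have hSQ : S * Q = 0 := by
    apply kua_eq_zero
    intro v
    rw [← Matrix.mulVec_mulVec]
    exact hSQv v
  have hQS : Q * S = 0 := by
    have h := congrArg Matrix.transpose hSQ
    rwa [transpose_mul, hSsym, hQsymm, transpose_zero] at h
  have hG'null : ∀ v : Fin Nθ → ℝ, S *ᵥ v = 0 → G' *ᵥ v = 0 := by
    intro v hv
    by_contra hne
    have hpos := hSνi.dotProduct_mulVec_pos (x := G' *ᵥ v) (by simpa using hne)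
    have h0 : v ⬝ᵥ (S *ᵥ v) = 0 := by rw [hv, dotProduct_zero]
    rw [hS, ← Matrix.mulVec_mulVec, ← Matrix.mulVec_mulVec,
      Matrix.dotProduct_mulVec v G'ᵀ, Matrix.vecMul_transpose] at h0
    rw [show star (G' *ᵥ v) = G' *ᵥ v from star_trivial _] at hpos
    linarith
  have hG'Q : G' * Q = 0 := by
    apply kua_eq_zero
    intro v
    rw [← Matrix.mulVec_mulVec]
    exact hG'null _ (hSQv v)
  have hQG't : Q * G'ᵀ = 0 := by
    have h := congrArg Matrix.transpose hG'Q
    rwa [transpose_mul, hQsymm, transpose_zero] at h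
  have hQb' : Q *ᵥ ((G'ᵀ * Sν⁻¹) *ᵥ y) = 0 := by
    rw [Matrix.mulVec_mulVec, ← Matrix.mul_assoc, hQG't, Matrix.zero_mul, Matrix.zero_mulVec]
  -- the mean recursion
  have hCm : ∀ n : ℕ, (C n)⁻¹ *ᵥ m n = (n : ℝ) • ((Gᵀ * Sν⁻¹) *ᵥ y) + (C 0)⁻¹ *ᵥ m 0 := by
    intro n
    induction n with
    | zero => simp
    | succ k ih =>
      rw [hmrec k, ih]
      push_cast
      rw [add_smul, one_smul]
      abel
  have hmain : ∀ n : ℕ,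
      ((1 : Matrix (Fin Nθ) (Fin Nθ) ℝ) + (n : ℝ) • S) *ᵥ (m' n)
        = (n : ℝ) • ((G'ᵀ * Sν⁻¹) *ᵥ y) + R⁻¹ *ᵥ m 0 := by
    intro n
    have e2 : R * (Gᵀ * Sν⁻¹) = G'ᵀ * Sν⁻¹ := by rw [hRGt, Matrix.mul_assoc]
    rw [← hRCnR n, hm' n]
    rw [Matrix.mulVec_mulVec, Matrix.mul_assoc (R * (C n)⁻¹) R R⁻¹, hRRinv, Matrix.mul_one,
      ← Matrix.mulVec_mulVec, hCm n, Matrix.mulVec_add, Matrix.mulVec_smul,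
      Matrix.mulVec_mulVec, Matrix.mulVec_mulVec, hRC0inv, e2]
  -- part (i)
  have hpart1 : ∀ n, Q *ᵥ m' n = Q *ᵥ m' 0 := by
    intro n
    have h1 : Q *ᵥ (((1 : Matrix (Fin Nθ) (Fin Nθ) ℝ) + (n : ℝ) • S) *ᵥ m' n)
        = Q *ᵥ ((n : ℝ) • ((G'ᵀ * Sν⁻¹) *ᵥ y) + R⁻¹ *ᵥ m 0) := by rw [hmain n]
    rw [Matrix.mulVec_mulVec, Matrix.mul_add, Matrix.mul_one, mul_smul_comm, hQS, smul_zero,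
      add_zero] at h1
    rw [Matrix.mulVec_add, Matrix.mulVec_smul, hQb', smul_zero, zero_add] at h1
    rw [hm' 0]
    exact h1
  refine ⟨hpart1, ?_, ?_⟩
  · -- part (ii)
    obtain ⟨u0, hu0⟩ := kua_surj S Q hSsym hQsymm hQrange (toE ((G'ᵀ * Sν⁻¹) *ᵥ y)) hQb'
    have hu0' : S *ᵥ u0 = (G'ᵀ * Sν⁻¹) *ᵥ y := hu0
    have hQmstar' : Q *ᵥ (((1 : Matrix (Fin Nθ) (Fin Nθ) ℝ) - Q) *ᵥ u0) = 0 := by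
      rw [Matrix.mulVec_mulVec, Matrix.mul_sub, Matrix.mul_one, hQidem, sub_self,
        Matrix.zero_mulVec]
    have hSmstar' : S *ᵥ (((1 : Matrix (Fin Nθ) (Fin Nθ) ℝ) - Q) *ᵥ u0)
        = (G'ᵀ * Sν⁻¹) *ᵥ y := by
      rw [Matrix.mulVec_mulVec, Matrix.mul_sub, Matrix.mul_one, hSQ, sub_zero]
      exact hu0'
    have hQrv' : Q *ᵥ ((((1 : Matrix (Fin Nθ) (Fin Nθ) ℝ) - Q) *ᵥ m' 0)
        - (((1 : Matrix (Fin Nθ) (Fin Nθ) ℝ) - Q) *ᵥ u0)) = 0 := by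
      rw [Matrix.mulVec_sub, hQmstar', Matrix.mulVec_mulVec, Matrix.mul_sub,
        Matrix.mul_one, hQidem, sub_self, Matrix.zero_mulVec, sub_zero]
    obtain ⟨u, hu⟩ := kua_surj S Q hSsym hQsymm hQrange
      (toE ((((1 : Matrix (Fin Nθ) (Fin Nθ) ℝ) - Q) *ᵥ m' 0)
        - (((1 : Matrix (Fin Nθ) (Fin Nθ) ℝ) - Q) *ᵥ u0))) hQrv'
    have hu' : S *ᵥ u = (((1 : Matrix (Fin Nθ) (Fin Nθ) ℝ) - Q) *ᵥ m' 0)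
        - (((1 : Matrix (Fin Nθ) (Fin Nθ) ℝ) - Q) *ᵥ u0) := hu
    refine ⟨toE (((1 : Matrix (Fin Nθ) (Fin Nθ) ℝ) - Q) *ᵥ u0), ⟨hQmstar', hSmstar'⟩, ?_,
      ⟨2 * ‖u‖ + 1, by positivity, ?_⟩⟩
    · intro m₂ hm₂
      obtain ⟨hq2, hs2⟩ := hm₂
      have hq2' : Q *ᵥ m₂ = 0 := hq2
      have hs2' : S *ᵥ m₂ = (G'ᵀ * Sν⁻¹) *ᵥ y := hs2
      have hd : S *ᵥ (m₂ - toE (((1 : Matrix (Fin Nθ) (Fin Nθ) ℝ) - Q) *ᵥ u0)) = (0 : Fin Nθ → ℝ) := by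
        rw [Matrix.mulVec_sub, hs2', hSmstar', sub_self]
      have hfix := (hQrange (m₂ - toE (((1 : Matrix (Fin Nθ) (Fin Nθ) ℝ) - Q) *ᵥ u0))).mp hd
      have hz : m₂ - toE (((1 : Matrix (Fin Nθ) (Fin Nθ) ℝ) - Q) *ᵥ u0) = 0 := by
        apply WithLp.ofLp_injective 2
        rw [← hfix]
        simp only [WithLp.ofLp_sub, toE, WithLp.ofLp_toLp, WithLp.ofLp_zero]
        rw [Matrix.mulVec_sub, hq2', hQmstar', sub_self]
      exact sub_eq_zero.mp hz
    · intro n hn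
      have hnpos : (0 : ℝ) < (n : ℝ) := by exact_mod_cast hn
      show ‖toE ((((1 : Matrix (Fin Nθ) (Fin Nθ) ℝ) - Q) *ᵥ m' n)
        - (((1 : Matrix (Fin Nθ) (Fin Nθ) ℝ) - Q) *ᵥ u0))‖ ≤ (2 * ‖u‖ + 1) / n
      set B := (1 : Matrix (Fin Nθ) (Fin Nθ) ℝ) + (n : ℝ) • S with hB
      have hnSpsd : ((n : ℝ) • S).PosSemidef := by
        refine Matrix.PosSemidef.of_dotProduct_mulVec_nonneg ?_ ?_
        · show ((n : ℝ) • S)ᴴ = (n : ℝ) • S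
          rw [conjTranspose_smul, conjTranspose_eq_transpose_of_trivial, hSsym, star_trivial]
        · intro x
          rw [Matrix.smul_mulVec, dotProduct_smul]
          exact smul_nonneg (Nat.cast_nonneg n) (hSpsd.dotProduct_mulVec_nonneg x)
      have hBpd : B.PosDef := Matrix.PosDef.add_posSemidef Matrix.PosDef.one hnSpsd
      have hBdet : IsUnit B.det := hBpd.det_pos.ne'.isUnit
      have hBQ : B * Q = Q := by
        rw [hB, Matrix.add_mul, Matrix.one_mul, smul_mul_assoc, hSQ, smul_zero, add_zero]
      have hQB : Q * B = Q := by
        rw [hB, Matrix.mul_add, Matrix.mul_one, mul_smul_comm, hQS, smul_zero, add_zero]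
      have hcomm : B * (1 - Q) = (1 - Q) * B := by
        rw [Matrix.mul_sub, Matrix.sub_mul, Matrix.mul_one, Matrix.one_mul, hBQ, hQB]
      have hBz : B *ᵥ ((((1 : Matrix (Fin Nθ) (Fin Nθ) ℝ) - Q) *ᵥ m' n)
            - (((1 : Matrix (Fin Nθ) (Fin Nθ) ℝ) - Q) *ᵥ u0))
          = (((1 : Matrix (Fin Nθ) (Fin Nθ) ℝ) - Q) *ᵥ m' 0)
            - (((1 : Matrix (Fin Nθ) (Fin Nθ) ℝ) - Q) *ᵥ u0) := by
        rw [Matrix.mulVec_sub]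
        have h1 : B *ᵥ (((1 : Matrix (Fin Nθ) (Fin Nθ) ℝ) - Q) *ᵥ m' n)
            = ((1 : Matrix (Fin Nθ) (Fin Nθ) ℝ) - Q) *ᵥ
              ((n : ℝ) • ((G'ᵀ * Sν⁻¹) *ᵥ y) + R⁻¹ *ᵥ m 0) := by
          rw [Matrix.mulVec_mulVec, hcomm, ← Matrix.mulVec_mulVec, hmain n]
        have h2 : B *ᵥ (((1 : Matrix (Fin Nθ) (Fin Nθ) ℝ) - Q) *ᵥ u0)
            = (((1 : Matrix (Fin Nθ) (Fin Nθ) ℝ) - Q) *ᵥ u0)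
              + (n : ℝ) • ((G'ᵀ * Sν⁻¹) *ᵥ y) := by
          rw [hB, Matrix.add_mulVec, Matrix.one_mulVec, Matrix.smul_mulVec, hSmstar']
        rw [h1, h2, Matrix.mulVec_add, Matrix.mulVec_smul, Matrix.sub_mulVec,
          Matrix.one_mulVec, hQb', sub_zero, hm' 0]
        abel
      have hw : B *ᵥ (B⁻¹ *ᵥ u) = u := by
        rw [Matrix.mulVec_mulVec, Matrix.mul_nonsing_inv _ hBdet, Matrix.one_mulVec]
      have hinj : Function.Injective B.mulVec :=
        mulVec_injective_iff_isUnit.mpr ((Matrix.isUnit_iff_isUnit_det B).mpr hBdet)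
      have hnz : (n : ℝ) • ((((1 : Matrix (Fin Nθ) (Fin Nθ) ℝ) - Q) *ᵥ m' n)
            - (((1 : Matrix (Fin Nθ) (Fin Nθ) ℝ) - Q) *ᵥ u0))
          + B⁻¹ *ᵥ u = u := by
        apply hinj
        rw [Matrix.mulVec_add, Matrix.mulVec_smul, hBz, hw, ← hu']
        show _ = B *ᵥ u
        rw [hB, Matrix.add_mulVec, Matrix.one_mulVec, Matrix.smul_mulVec]
        abel
      have hu2 : toE u = toE (B⁻¹ *ᵥ u) + (n : ℝ) • toE (S *ᵥ (B⁻¹ *ᵥ u)) := by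
        have h6 : B *ᵥ (B⁻¹ *ᵥ u) = (B⁻¹ *ᵥ u) + (n : ℝ) • (S *ᵥ (B⁻¹ *ᵥ u)) := by
          rw [hB, Matrix.add_mulVec, Matrix.one_mulVec, Matrix.smul_mulVec]
        exact congrArg (WithLp.toLp 2) (hw.symm.trans h6)
      have hip2 : 0 ≤ ⟪toE (B⁻¹ *ᵥ u), toE (S *ᵥ (B⁻¹ *ᵥ u))⟫ := by
        rw [kua_inner_dot]
        show 0 ≤ (B⁻¹ *ᵥ u) ⬝ᵥ (S *ᵥ (B⁻¹ *ᵥ u))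
        have h5 := hSpsd.dotProduct_mulVec_nonneg (B⁻¹ *ᵥ u)
        rwa [star_trivial] at h5
      have hq : ‖toE u‖ ^ 2 = ‖toE (B⁻¹ *ᵥ u)‖ ^ 2
          + 2 * ⟪toE (B⁻¹ *ᵥ u), (n : ℝ) • toE (S *ᵥ (B⁻¹ *ᵥ u))⟫
          + ‖(n : ℝ) • toE (S *ᵥ (B⁻¹ *ᵥ u))‖ ^ 2 := by
        rw [hu2]
        exact norm_add_sq_real _ _
      have hip : ⟪toE (B⁻¹ *ᵥ u), (n : ℝ) • toE (S *ᵥ (B⁻¹ *ᵥ u))⟫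
          = (n : ℝ) * ⟪toE (B⁻¹ *ᵥ u), toE (S *ᵥ (B⁻¹ *ᵥ u))⟫ :=
        real_inner_smul_right _ _ _
      have huE : ‖toE u‖ = ‖u‖ := rfl
      have hwu : ‖toE (B⁻¹ *ᵥ u)‖ ≤ ‖u‖ := by
        nlinarith [norm_nonneg (toE (B⁻¹ *ᵥ u)), norm_nonneg u,
          sq_nonneg ‖(n : ℝ) • toE (S *ᵥ (B⁻¹ *ᵥ u))‖]
      have hdiff : toE u - toE (B⁻¹ *ᵥ u)
          = (n : ℝ) • toE ((((1 : Matrix (Fin Nθ) (Fin Nθ) ℝ) - Q) *ᵥ m' n)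
            - (((1 : Matrix (Fin Nθ) (Fin Nθ) ℝ) - Q) *ᵥ u0)) := by
        rw [sub_eq_iff_eq_add]
        exact congrArg (WithLp.toLp 2) hnz.symm
      have hnormz : (n : ℝ) * ‖toE ((((1 : Matrix (Fin Nθ) (Fin Nθ) ℝ) - Q) *ᵥ m' n)
            - (((1 : Matrix (Fin Nθ) (Fin Nθ) ℝ) - Q) *ᵥ u0))‖
          = ‖toE u - toE (B⁻¹ *ᵥ u)‖ := by
        rw [hdiff, norm_smul]
        simp [abs_of_pos hnpos]
      have hn2u : ‖toE u - toE (B⁻¹ *ᵥ u)‖ ≤ 2 * ‖u‖ := by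
        calc ‖toE u - toE (B⁻¹ *ᵥ u)‖ ≤ ‖toE u‖ + ‖toE (B⁻¹ *ᵥ u)‖ := norm_sub_le _ _
        _ ≤ 2 * ‖u‖ := by rw [huE]; linarith
      rw [le_div_iff₀ hnpos]
      calc ‖toE ((((1 : Matrix (Fin Nθ) (Fin Nθ) ℝ) - Q) *ᵥ m' n)
            - (((1 : Matrix (Fin Nθ) (Fin Nθ) ℝ) - Q) *ᵥ u0))‖ * (n : ℝ)
          = (n : ℝ) * ‖toE ((((1 : Matrix (Fin Nθ) (Fin Nθ) ℝ) - Q) *ᵥ m' n)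
            - (((1 : Matrix (Fin Nθ) (Fin Nθ) ℝ) - Q) *ᵥ u0))‖ := mul_comm _ _
        _ = ‖toE u - toE (B⁻¹ *ᵥ u)‖ := hnormz
        _ ≤ 2 * ‖u‖ := hn2u
        _ ≤ 2 * ‖u‖ + 1 := by linarith
  · -- part (iii)
    intro n
    refine ⟨hC'invEq n, ?_⟩
    rw [hC'invEq n, Matrix.mul_add, Matrix.mul_one, mul_smul_comm, hQS, smul_zero, add_zero]
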